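/- Let λ be an infinite cardinal, let X ∈ Δ(λ) with witnessing dense set S, and let f : X → Y be a continuous surjection onto a compact Hausdorff space Y with w(Y) ≥ λ. Then Y ∈ Δ(λ), with f[S] as a witnessing dense set; that is, Δ(λ) is closed under continuous images of weight ≥ λ. -/

import Mathlib

open Cardinal Set Function

universe u

noncomputable section

/-- The density of a topological space: least cardinality of a dense subset. -/
def tdensity (X : Type u) [TopologicalSpace X] : Cardinal.{u} :=
  sInf {c : Cardinal.{u} | ∃ s : Set X, Dense s ∧ #s = c}

/-- The weight of a topological space: least cardinality of a base. -/
def tweight (X : Type u) [TopologicalSpace X] : Cardinal.{u} :=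
  sInf {c : Cardinal.{u} | ∃ B : Set (Set X), TopologicalSpace.IsTopologicalBasis B ∧ #B = c}

/-- The π-weight: least cardinality of a π-base. -/
def piWeight (X : Type u) [TopologicalSpace X] : Cardinal.{u} :=
  sInf {c : Cardinal.{u} | ∃ B : Set (Set X),
    (∀ U ∈ B, IsOpen U ∧ U.Nonempty) ∧
    (∀ V : Set X, IsOpen V → V.Nonempty → ∃ U ∈ B, U ⊆ V) ∧ #B = c}

/-- ĉ(X): the least cardinal κ such that X has no pairwise disjoint family of κ
nonempty open sets. -/
def hatCell (X : Type u) [TopologicalSpace X] : Cardinal.{u} :=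
  sInf {c : Cardinal.{u} | ¬ ∃ 𝒰 : Set (Set X),
    (∀ U ∈ 𝒰, IsOpen U ∧ U.Nonempty) ∧ 𝒰.PairwiseDisjoint id ∧ #𝒰 = c}

/-- `H` is a closed G_λ set: closed and the intersection of at most λ open sets. -/
def IsClosedGLambda (lam : Cardinal.{u}) {X : Type u} [TopologicalSpace X] (H : Set X) : Prop :=
  IsClosed H ∧ ∃ 𝒰 : Set (Set X), (∀ U ∈ 𝒰, IsOpen U) ∧ #𝒰 ≤ lam ∧ H = ⋂₀ 𝒰

/-- X ∈ Γ(λ): every closed G_λ set has density ≤ λ. -/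
def InGamma (lam : Cardinal.{u}) (X : Type u) [TopologicalSpace X] : Prop :=
  ∀ H : Set X, IsClosedGLambda lam H → tdensity ↥H ≤ lam

/-- `S` witnesses `X ∈ Δ(λ)`. -/
def DeltaWitness (lam : Cardinal.{u}) (X : Type u) [TopologicalSpace X] (S : Set X) : Prop :=
  Dense S ∧
  (∀ T : Set X, T ⊆ S → #T < lam → tweight ↥(closure T) < lam) ∧
  (∀ (Y : Type u) (_ : TopologicalSpace Y), T2Space Y → ∀ f : X → Y,
     Continuous f → Surjective f → tweight Y = lam → #(f '' S) = lam)

/-- X ∈ Δ(λ). -/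
def InDelta (lam : Cardinal.{u}) (X : Type u) [TopologicalSpace X] : Prop :=
  lam ≤ tweight X ∧ ∃ S : Set X, DeltaWitness lam X S

/-- A canonical discrete space of cardinality `c`. -/
instance (c : Cardinal.{u}) : TopologicalSpace c.out := ⊥

instance (c : Cardinal.{u}) : DiscreteTopology c.out := ⟨rfl⟩

/-- A(μ): one-point compactification of a discrete space of cardinality μ. -/
def ACompact (μ : Cardinal.{u}) : Type u := OnePoint μ.out

instance (μ : Cardinal.{u}) : TopologicalSpace (ACompact μ) :=
  inferInstanceAs (TopologicalSpace (OnePoint μ.out))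

/-- A(μ)^κ. -/
def APow (μ κ : Cardinal.{u}) : Type u := κ.out → ACompact μ

instance (μ κ : Cardinal.{u}) : TopologicalSpace (APow μ κ) :=
  inferInstanceAs (TopologicalSpace (κ.out → ACompact μ))

/-- The set of finite-support points of A(μ)^κ. -/
def finSupport (μ κ : Cardinal.{u}) : Set (APow μ κ) :=
  {x | {ξ | x ξ ≠ (OnePoint.infty : OnePoint μ.out)}.Finite}

/-- X is polyadic: a continuous image of some A(μ)^κ. -/
def IsPolyadic (X : Type u) [TopologicalSpace X] : Prop :=
  ∃ μ κ : Cardinal.{u}, ℵ₀ ≤ μ ∧ ∃ f : APow μ κ → X, Continuous f ∧ Surjective f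
lemma exists_basis_tweight (X : Type u) [TopologicalSpace X] :
    ∃ B : Set (Set X), TopologicalSpace.IsTopologicalBasis B ∧ #B = tweight X := by
  have hne : {c : Cardinal.{u} | ∃ B : Set (Set X),
      TopologicalSpace.IsTopologicalBasis B ∧ #B = c}.Nonempty :=
    ⟨#{s : Set X | IsOpen s}, {s | IsOpen s}, TopologicalSpace.isTopologicalBasis_opens, rfl⟩
  have := csInf_mem hne
  obtain ⟨B, hB, hc⟩ := this
  exact ⟨B, hB, hc⟩

lemma tweight_le_basis {X : Type u} [TopologicalSpace X] {B : Set (Set X)}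
    (hB : TopologicalSpace.IsTopologicalBasis B) : tweight X ≤ #B :=
  csInf_le' ⟨B, hB, rfl⟩

lemma tweight_image_lt {K Y : Type u} [TopologicalSpace K] [CompactSpace K]
    [TopologicalSpace Y] [T2Space Y]
    {f : K → Y} (hf : Continuous f) (hs : Surjective f)
    {lam : Cardinal.{u}} (hlam : ℵ₀ ≤ lam) (h : tweight K < lam) : tweight Y < lam := by
  classical
  obtain ⟨B, hB, hBcard⟩ := exists_basis_tweight K
  set F : Finset ↥B → Set Y := fun s => (f '' (⋃ u ∈ s, (u : Set K))ᶜ)ᶜ with hF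
  have hclosed : ∀ s : Finset ↥B, IsClosed (f '' (⋃ u ∈ s, (u : Set K))ᶜ) := by
    intro s
    have ho : IsOpen (⋃ u ∈ s, (u : Set K)) :=
      isOpen_biUnion (fun u _ => hB.isOpen u.2)
    exact ((ho.isClosed_compl).isCompact.image hf).isClosed
  have hbasis : TopologicalSpace.IsTopologicalBasis (Set.range F) := by
    apply TopologicalSpace.isTopologicalBasis_of_isOpen_of_nhds
    · rintro _ ⟨s, rfl⟩
      exact (hclosed s).isOpen_compl
    · intro a V haV hV
      have hA : IsCompact (f ⁻¹' {a}) := (isClosed_singleton.preimage hf).isCompact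
      have hcover : f ⁻¹' {a} ⊆
          ⋃ u : {u : Set K // u ∈ B ∧ u ⊆ f ⁻¹' V}, (u : Set K) := by
        intro x hx
        have hxV : x ∈ f ⁻¹' V := by
          have : f x = a := hx
          simp [Set.mem_preimage, this, haV]
        obtain ⟨u, huB, hxu, huV⟩ := hB.exists_subset_of_mem_open hxV (hV.preimage hf)
        exact Set.mem_iUnion.2 ⟨⟨u, huB, huV⟩, hxu⟩
      obtain ⟨s, hsub⟩ := hA.elim_finite_subcover
        (fun u : {u : Set K // u ∈ B ∧ u ⊆ f ⁻¹' V} => (u : Set K))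
        (fun u => hB.isOpen u.2.1) hcover
      set t : Finset ↥B := s.image (fun u => ⟨u.1, u.2.1⟩) with ht
      refine ⟨F t, ⟨t, rfl⟩, ?_, ?_⟩
      · -- a ∈ F t
        rintro ⟨x, hx, hfx⟩
        apply hx
        have hxA : x ∈ f ⁻¹' {a} := by simp [Set.mem_preimage, hfx]
        have := hsub hxA
        obtain ⟨u, hus, hxu⟩ := Set.mem_iUnion₂.1 this
        exact Set.mem_biUnion (Finset.mem_image_of_mem _ hus) hxu
      · -- F t ⊆ V
        intro z hz
        obtain ⟨x, rfl⟩ := hs z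
        have hxt : x ∈ ⋃ u ∈ t, (u : Set K) := by
          by_contra hxn
          exact hz ⟨x, hxn, rfl⟩
        obtain ⟨u, hut, hxu⟩ := Set.mem_iUnion₂.1 hxt
        obtain ⟨v, hvs, hvu⟩ := Finset.mem_image.1 hut
        have : (u : Set K) ⊆ f ⁻¹' V := by
          have : (v.1 : Set K) ⊆ f ⁻¹' V := v.2.2
          rwa [show (u : Set K) = v.1 from by rw [← hvu]]
        exact this hxu
  have hle : tweight Y ≤ #(Set.range F) := tweight_le_basis hbasis
  have h2 : #(Set.range F) ≤ #(Finset ↥B) := Cardinal.mk_range_le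
  have h3 : #(Finset ↥B) < lam := by
    rcases lt_or_ge (#↥B) ℵ₀ with hfin | hinf
    · have : Finite ↥B := Cardinal.lt_aleph0_iff_finite.1 hfin
      haveI : Fintype ↥B := Fintype.ofFinite _
      exact lt_of_lt_of_le (Cardinal.lt_aleph0_iff_finite.2 inferInstance) hlam
    · have : Infinite ↥B := Cardinal.aleph0_le_mk_iff.1 hinf
      rw [Cardinal.mk_finset_of_infinite]
      exact hBcard ▸ h
  exact lt_of_le_of_lt (hle.trans h2) h3

lemma dense_image_of_surj {X Y : Type u} [TopologicalSpace X] [TopologicalSpace Y]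
    {f : X → Y} (hf : Continuous f) (hs : Surjective f) {S : Set X} (hS : Dense S) :
    Dense (f '' S) := by
  rw [dense_iff_closure_eq]
  apply Set.eq_univ_of_univ_subset
  calc Set.univ = f '' Set.univ := (Set.image_univ_of_surjective hs).symm
    _ = f '' closure S := by rw [hS.closure_eq]
    _ ⊆ closure (f '' S) := image_closure_subset_closure_image hf

/-- Δ(λ) is closed under continuous images of weight ≥ λ. -/
theorem statement8 (lam : Cardinal.{u}) (hlam : ℵ₀ ≤ lam)
    {X Y : Type u} [TopologicalSpace X] [CompactSpace X] [T2Space X]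
    [TopologicalSpace Y] [CompactSpace Y] [T2Space Y]
    (S : Set X) (hwX : lam ≤ tweight X) (hS : DeltaWitness lam X S)
    (f : X → Y) (hf : Continuous f) (hsurj : Surjective f) (hwY : lam ≤ tweight Y) :
    InDelta lam Y ∧ DeltaWitness lam Y (f '' S) := by
  classical
  obtain ⟨hdense, hsmall, himg⟩ := hS
  have hwit : DeltaWitness lam Y (f '' S) := by
    refine ⟨dense_image_of_surj hf hsurj hdense, ?_, ?_⟩
    · -- small subsets condition
      intro T hTsub hTcard
      -- choose preimages in S
      have hch : ∀ y : T, ∃ x, x ∈ S ∧ f x = (y : Y) := by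
        intro y
        obtain ⟨x, hxS, hfx⟩ := hTsub y.2
        exact ⟨x, hxS, hfx⟩
      choose g hgS hgf using hch
      set T' : Set X := Set.range g with hT'
      have hT'S : T' ⊆ S := by
        rintro _ ⟨y, rfl⟩; exact hgS y
      have hT'card : #T' < lam := lt_of_le_of_lt Cardinal.mk_range_le hTcard
      have hfT' : f '' T' = T := by
        ext z
        constructor
        · rintro ⟨_, ⟨y, rfl⟩, rfl⟩
          rw [hgf y]; exact y.2
        · intro hz
          exact ⟨g ⟨z, hz⟩, ⟨⟨z, hz⟩, rfl⟩, hgf ⟨z, hz⟩⟩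
      have hw' : tweight ↥(closure T') < lam := hsmall T' hT'S hT'card
      -- f maps closure T' onto closure T
      have hclosedT' : IsClosed (closure T') := isClosed_closure
      have hcompK : CompactSpace ↥(closure T') :=
        isCompact_iff_compactSpace.1 hclosedT'.isCompact
      have himsub : f '' closure T' ⊆ closure T := by
        calc f '' closure T' ⊆ closure (f '' T') := image_closure_subset_closure_image hf
          _ = closure T := by rw [hfT']
      have himsup : closure T ⊆ f '' closure T' := by
        have hcl : IsClosed (f '' closure T') :=
          (hclosedT'.isCompact.image hf).isClosed
        apply closure_minimal _ hcl
        rw [← hfT']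
        exact Set.image_mono (f := f) subset_closure
      -- the restricted map
      set φ : ↥(closure T') → ↥(closure T) :=
        fun x => ⟨f x, himsub ⟨x, x.2, rfl⟩⟩ with hφ
      have hφc : Continuous φ :=
        Continuous.subtype_mk (hf.comp continuous_subtype_val) _
      have hφs : Surjective φ := by
        rintro ⟨z, hz⟩
        obtain ⟨x, hx, hfx⟩ := himsup hz
        exact ⟨⟨x, hx⟩, Subtype.ext hfx⟩
      exact tweight_image_lt hφc hφs hlam hw'
    · -- images condition
      intro Z instZ t2Z g hg hgsurj hwZ
      have := himg Z instZ t2Z (g ∘ f) (hg.comp hf) (hgsurj.comp hsurj) hwZ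
      rwa [Set.image_comp] at this
  exact ⟨⟨hwY, f '' S, hwit⟩, hwit⟩
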